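/- Let 1 < α < 2, t > 0, and p = ( sin(π/(2α)) − √(−cos(π/α)) ) / ( 2 sin(π/(2α)) ), and let f = f_{α,p,t}. Then the second derivative of f at the stationary point x = t √(−cos(π/α)) equals f″( t √(−cos(π/α)) ) = (1/π) · ( 3 cos²(π/(2α)) − 1 ) / ( 2 t³ cos(π/(2α)) sin⁴(π/(2α)) ). -/

import Mathlib

open Real

noncomputable def cauchyMixDensity (α p t x : ℝ) : ℝ :=
  (t * Real.cos (π / (2 * α)) / π) *
    ((x ^ 2 + t ^ 2 + 2 * (2 * p - 1) * x * t * Real.sin (π / (2 * α))) /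
      (x ^ 4 + t ^ 4 + 2 * x ^ 2 * t ^ 2 * Real.cos (π / α)))

/-- For `1 < α < 2`, `t > 0` and
`p = (sin(π/(2α)) − √(−cos(π/α)))/(2 sin(π/(2α)))`, the second derivative of
`f = f_{α,p,t}` at the stationary point `x = t √(−cos(π/α))` equals
`(1/π)(3 cos²(π/(2α)) − 1)/(2 t³ cos(π/(2α)) sin⁴(π/(2α)))`. -/
theorem cauchyMix_second_deriv_at_stationary (α t : ℝ) (hα1 : 1 < α)
    (hα2 : α < 2) (ht : 0 < t) :
    deriv (deriv (cauchyMixDensity α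
        ((Real.sin (π / (2 * α)) - Real.sqrt (-Real.cos (π / α))) /
          (2 * Real.sin (π / (2 * α)))) t))
      (t * Real.sqrt (-Real.cos (π / α))) =
    (1 / π) * (3 * Real.cos (π / (2 * α)) ^ 2 - 1) /
      (2 * t ^ 3 * Real.cos (π / (2 * α)) * Real.sin (π / (2 * α)) ^ 4) := by
  have hπ : (0:ℝ) < π := Real.pi_pos
  set s := Real.sin (π/(2*α)) with hs_def
  set c := Real.cos (π/(2*α)) with hc_def
  set r := Real.sqrt (-Real.cos (π/α)) with hr_def
  have hα0 : (0:ℝ) < α := by linarith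
  have hθpos : 0 < π/(2*α) := by positivity
  have hθlt : π/(2*α) < π/2 := by
    apply div_lt_div_of_pos_left hπ (by norm_num) (by linarith)
  have hθgt : π/4 < π/(2*α) := by
    apply div_lt_div_of_pos_left hπ (by positivity) (by linarith)
  have hc : 0 < c := by
    rw [hc_def]; exact Real.cos_pos_of_mem_Ioo ⟨by linarith, hθlt⟩
  have hs : 0 < s := by
    rw [hs_def]; exact Real.sin_pos_of_pos_of_lt_pi hθpos (by linarith)
  have hpy : s^2 + c^2 = 1 := by rw [hs_def, hc_def]; exact Real.sin_sq_add_cos_sq _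
  have h2θ : π/α = 2*(π/(2*α)) := by field_simp
  have hcos2 : Real.cos (π/α) = c^2 - s^2 := by
    rw [h2θ, Real.cos_two_mul, ← hc_def]
    linear_combination hpy
  have hcosneg : Real.cos (π/α) < 0 := by
    rw [h2θ]
    exact Real.cos_neg_of_pi_div_two_lt_of_lt (by linarith) (by linarith)
  have hr2 : r^2 = s^2 - c^2 := by
    rw [hr_def, Real.sq_sqrt (by linarith), hcos2]; ring

  -- denominator positivity
  have hden : ∀ x : ℝ, 0 < x^4 + t^4 + 2*t^2*(c^2-s^2)*x^2 := by
    intro x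
    have key : x^4 + t^4 + 2*t^2*(c^2-s^2)*x^2 = (x^2-t^2)^2 + 4*c^2*t^2*x^2 := by
      linear_combination (-2*t^2*x^2) * hpy
    rw [key]
    rcases eq_or_ne x 0 with h|h
    · subst h; norm_num; positivity
    · have hx2 : 0 < x^2 := by rcases h.lt_or_gt with h'|h' <;> nlinarith
      nlinarith [sq_nonneg (x^2-t^2), mul_pos (mul_pos (mul_pos hc hc) (mul_pos ht ht)) hx2]
  -- rewrite the density as a nice function F
  have hf : cauchyMixDensity α ((s - r)/(2*s)) t
      = fun y : ℝ => t*c/π * ((y^2 + t^2 - 2*t*r*y) / (y^4 + t^4 + 2*t^2*(c^2-s^2)*y^2)) := by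
    funext x
    simp only [cauchyMixDensity, ← hs_def, ← hc_def, hcos2]
    rw [show x ^ 4 + t ^ 4 + 2 * x ^ 2 * t ^ 2 * (c ^ 2 - s ^ 2)
        = x ^ 4 + t ^ 4 + 2 * t ^ 2 * (c ^ 2 - s ^ 2) * x ^ 2 from by ring]
    congr 2
    field_simp
    ring

  have hNum : ∀ x:ℝ, HasDerivAt (fun y:ℝ => y^2 + t^2 - 2*t*r*y) (2*x - 2*t*r) x := by
    intro x
    have h := ((hasDerivAt_pow 2 x).add_const (t^2)).sub (HasDerivAt.const_mul (2*t*r) (hasDerivAt_id' x))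
    refine h.congr_deriv ?_
    push_cast; ring
  have hDen' : ∀ x:ℝ, HasDerivAt (fun y:ℝ => y^4 + t^4 + 2*t^2*(c^2-s^2)*y^2)
      (4*x^3 + 4*t^2*(c^2-s^2)*x) x := by
    intro x
    have h := ((hasDerivAt_pow 4 x).add_const (t^4)).add
      (HasDerivAt.const_mul (2*t^2*(c^2-s^2)) (hasDerivAt_pow 2 x))
    refine h.congr_deriv ?_
    push_cast; ring
  have hderivF : deriv (fun y:ℝ => t*c/π * ((y^2 + t^2 - 2*t*r*y) / (y^4 + t^4 + 2*t^2*(c^2-s^2)*y^2)))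
      = fun x:ℝ => t*c/π * (((2*x - 2*t*r) * (x^4 + t^4 + 2*t^2*(c^2-s^2)*x^2)
        - (x^2 + t^2 - 2*t*r*x) * (4*x^3 + 4*t^2*(c^2-s^2)*x))
        / (x^4 + t^4 + 2*t^2*(c^2-s^2)*x^2)^2) :=
    funext fun x => (HasDerivAt.const_mul (t*c/π) ((hNum x).div (hDen' x) (hden x).ne')).deriv
  rw [hf, hderivF]
  have hNd : HasDerivAt (fun y:ℝ => 2*y - 2*t*r) 2 (t*r) := by
    have h := (HasDerivAt.const_mul (2:ℝ) (hasDerivAt_id' (t*r))).sub_const (2*t*r)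
    refine h.congr_deriv ?_
    norm_num
  have hDd : HasDerivAt (fun y:ℝ => 4*y^3 + 4*t^2*(c^2-s^2)*y)
      (12*(t*r)^2 + 4*t^2*(c^2-s^2)) (t*r) := by
    have h := (HasDerivAt.const_mul (4:ℝ) (hasDerivAt_pow 3 (t*r))).add
      (HasDerivAt.const_mul (4*t^2*(c^2-s^2)) (hasDerivAt_id' (t*r)))
    refine h.congr_deriv ?_
    push_cast; ring
  have hP := (hNd.mul (hDen' (t*r))).sub ((hNum (t*r)).mul hDd)
  have hQ := (hDen' (t*r)).pow 2
  have hG : HasDerivAt (fun x:ℝ => t*c/π * (((2*x - 2*t*r) * (x^4 + t^4 + 2*t^2*(c^2-s^2)*x^2)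
        - (x^2 + t^2 - 2*t*r*x) * (4*x^3 + 4*t^2*(c^2-s^2)*x))
        / (x^4 + t^4 + 2*t^2*(c^2-s^2)*x^2)^2)) _ (t*r) :=
    HasDerivAt.const_mul (t*c/π) (hP.div hQ (pow_ne_zero 2 (hden (t*r)).ne'))
  rw [hG.deriv]
  have hr4 : r^4 = (s^2-c^2)^2 := by rw [show r^4 = (r^2)^2 from by ring, hr2]
  have hDen0 : (t * r) ^ 4 + t ^ 4 + 2 * t ^ 2 * (c ^ 2 - s ^ 2) * (t * r) ^ 2
      = 4*t^4*c^2*s^2 := by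
    linear_combination t^4*hr4 + 2*t^4*(c^2-s^2)*hr2 - t^4*(s^2+c^2+1)*hpy
  have hNd0 : 2 * (t * r) - 2 * (t * r) = 0 := by ring
  have hDd0 : 4 * (t * r) ^ 3 + 4 * t ^ 2 * (c ^ 2 - s ^ 2) * (t * r) = 0 := by
    linear_combination 4*t^3*r*hr2
  have hNum0 : (t * r) ^ 2 + t ^ 2 - 2 * t * r * (t * r) = 2*t^2*c^2 := by
    linear_combination (-t^2)*hr2 + (-t^2)*hpy
  have hDdp0 : 12 * (t * r) ^ 2 + 4 * t ^ 2 * (c ^ 2 - s ^ 2) = 8*t^2*s^2 - 8*t^2*c^2 := by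
    linear_combination 12*t^2*hr2
  rw [show (2:ℝ) * (t * r) - 2 * t * r = 0 from by ring, hDen0, hDd0, hNum0, hDdp0,
    show (3:ℝ)*c^2-1 = 2*c^2-s^2 from by linear_combination hpy]
  norm_num
  have h4 : (4:ℝ)*t^4*c^2*s^2 ≠ 0 := by positivity
  field_simp
  ring
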